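/- (Deterministic core of Theorem 1 of the paper.) Let d* ∈ ℝ and let (d_t)_{t≥0}, (g_t)_{t≥0} be real sequences and (θ̃_t)_{t≥0} a sequence with θ̃_t ∈ (0, 1] for all t. Assume for every t ≥ 0: d_t ≤ d*, g_t ≥ d* − d_t, and d_{t+1} − d_t ≥ θ̃_t·g_t. Then for every t ≥ 0: (i) d* − d_t ≤ (∏_{k=0}^{t−1}(1 − θ̃_k))·(d* − d_0), and (ii) g_t ≤ (1/θ̃_t)·(∏_{k=0}^{t−1}(1 − θ̃_k))·(d* − d_0). -/

import Mathlib

open scoped BigOperators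

/-- deterministic core of Theorem 1: Let `d* ∈ ℝ`, `(d_t)`, `(g_t)` real
sequences and `(θ̃_t)` with `θ̃_t ∈ (0,1]`. If for all `t`: `d_t ≤ d*`, `g_t ≥ d* − d_t`
and `d_{t+1} − d_t ≥ θ̃_t g_t`, then for every `t`:
(i) `d* − d_t ≤ (∏_{k=0}^{t−1}(1−θ̃_k))(d* − d_0)` and
(ii) `g_t ≤ (1/θ̃_t)(∏_{k=0}^{t−1}(1−θ̃_k))(d* − d_0)`. -/
theorem stmt10 (dstar : ℝ) (dseq gseq θ : ℕ → ℝ)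
    (hθ : ∀ t, θ t ∈ Set.Ioc (0 : ℝ) 1)
    (hd : ∀ t, dseq t ≤ dstar)
    (hg : ∀ t, gseq t ≥ dstar - dseq t)
    (hascent : ∀ t, dseq (t + 1) - dseq t ≥ θ t * gseq t) :
    ∀ t : ℕ,
      dstar - dseq t ≤ (∏ k ∈ Finset.range t, (1 - θ k)) * (dstar - dseq 0) ∧
      gseq t ≤ (1 / θ t) * (∏ k ∈ Finset.range t, (1 - θ k)) * (dstar - dseq 0) := by
  have key : ∀ t, dstar - dseq t ≤ (∏ k ∈ Finset.range t, (1 - θ k)) * (dstar - dseq 0) := by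
    intro t
    induction t with
    | zero => simp
    | succ n ih =>
      have hθn := hθ n
      have h1 : dstar - dseq (n + 1) ≤ (1 - θ n) * (dstar - dseq n) := by
        have := hascent n
        have := hg n
        nlinarith [hθn.1, hθn.2]
      have h2 : (1 - θ n) * (dstar - dseq n) ≤
          (1 - θ n) * ((∏ k ∈ Finset.range n, (1 - θ k)) * (dstar - dseq 0)) := by
        apply mul_le_mul_of_nonneg_left ih
        linarith [hθn.2]
      rw [Finset.prod_range_succ]
      calc dstar - dseq (n + 1) ≤ (1 - θ n) * (dstar - dseq n) := h1
        _ ≤ (1 - θ n) * ((∏ k ∈ Finset.range n, (1 - θ k)) * (dstar - dseq 0)) := h2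
        _ = (∏ k ∈ Finset.range n, (1 - θ k)) * (1 - θ n) * (dstar - dseq 0) := by ring
  intro t
  refine ⟨key t, ?_⟩
  have hθt := hθ t
  have h1 : θ t * gseq t ≤ dstar - dseq t := by
    have := hascent t
    have := hd (t + 1)
    linarith
  have h2 : θ t * gseq t ≤ (∏ k ∈ Finset.range t, (1 - θ k)) * (dstar - dseq 0) :=
    h1.trans (key t)
  rw [div_mul_eq_mul_div, div_mul_eq_mul_div, one_mul, le_div_iff₀ hθt.1]
  linarith
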